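/- arXiv:2112.12134 — 2 statements merged into one kernel-verified Lean document; each statement's English description precedes it below -/
import Mathlib

section
/- Telescoping lemma for nonincreasing cumulative parameters: Let E be a real normed vector space, ψ: E → ℝ ∪ {+∞} proper, convex, lower semicontinuous, a ∈ E and a^ψ ∈ ∂ψ(a). Let T ≥ 1, η_1 ≥ η_2 ≥ … ≥ η_{T+1} > 0, and v_1,…,v_{T+1} ∈ E* with v_1 = a^ψ. Let z ∈ dom ψ, and assume ψ*(v_t) < +∞ and ψ*(a^ψ + (η_t/η_{t+1})(v_{t+1} − a^ψ)) < +∞ for all t ≤ T. Then Σ_{t=1}^T (1/η_t)[B_ψ(z, v_t) − B_ψ(z, a^ψ + (η_t/η_{t+1})(v_{t+1} − a^ψ))] ≤ (1/η_{T+1}) B_ψ(z, a^ψ). -/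
open Finset

/-- Fenchel conjugate of an extended-real-valued function on a normed space. -/
noncomputable def fconj {E : Type*} [NormedAddCommGroup E] [NormedSpace ℝ E]
    (ψ : E → EReal) (p : E →L[ℝ] ℝ) : EReal :=
  ⨆ x : E, ((p x : ℝ) : EReal) - ψ x

/-- Generalized Bregman divergence `B_ψ(x, y*) = ψ(x) + ψ*(y*) − ⟨y*, x⟩`. -/
noncomputable def breg {E : Type*} [NormedAddCommGroup E] [NormedSpace ℝ E]
    (ψ : E → EReal) (x : E) (p : E →L[ℝ] ℝ) : EReal :=
  ψ x + fconj ψ p - ((p x : ℝ) : EReal)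

/-- Subdifferential: `∂ψ(x) = {x* : B_ψ(x, x*) = 0}`. -/
def subdiff {E : Type*} [NormedAddCommGroup E] [NormedSpace ℝ E]
    (ψ : E → EReal) (x : E) : Set (E →L[ℝ] ℝ) :=
  {p | breg ψ x p = 0}

section Aux
variable {E : Type*} [NormedAddCommGroup E] [NormedSpace ℝ E]

lemma fconj_ne_bot (ψ : E → EReal) (hbot : ∀ x, ψ x ≠ ⊥) (hproper : ∃ x, ψ x ≠ ⊤)
    (p : E →L[ℝ] ℝ) : fconj ψ p ≠ ⊥ := by
  obtain ⟨x₀, hx₀⟩ := hproper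
  have h := le_iSup (fun x => ((p x : ℝ) : EReal) - ψ x) x₀
  have hr : ψ x₀ = ((ψ x₀).toReal : EReal) := (EReal.coe_toReal hx₀ (hbot x₀)).symm
  rw [hr] at h
  rw [← EReal.coe_sub] at h
  intro hb
  have h2 : ((p x₀ - (ψ x₀).toReal : ℝ) : EReal) ≤ fconj ψ p := h
  rw [hb] at h2
  exact (EReal.bot_lt_coe _).not_ge h2

lemma fy_real (ψ : E → EReal) (x : E) (s : ℝ) (hs : ψ x = (s : EReal)) (p : E →L[ℝ] ℝ) :
    ((p x - s : ℝ) : EReal) ≤ fconj ψ p := by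
  have h := le_iSup (fun y => ((p y : ℝ) : EReal) - ψ y) x
  rwa [hs, ← EReal.coe_sub] at h

lemma fconj_combo (ψ : E → EReal) (hbot : ∀ x, ψ x ≠ ⊥) (p q : E →L[ℝ] ℝ) (P Q : ℝ)
    (hp : fconj ψ p ≤ (P : EReal)) (hq : fconj ψ q ≤ (Q : EReal))
    (l : ℝ) (hl0 : 0 ≤ l) (hl1 : l ≤ 1) :
    fconj ψ (l • p + (1 - l) • q) ≤ ((l * P + (1 - l) * Q : ℝ) : EReal) := by
  refine iSup_le fun x => ?_
  by_cases hx : ψ x = ⊤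
  · simp [hx]
  · have hs : ψ x = ((ψ x).toReal : EReal) := (EReal.coe_toReal hx (hbot x)).symm
    set s := (ψ x).toReal with hsdef
    have hP : p x - s ≤ P := by
      have := (fy_real ψ x s hs p).trans hp
      exact_mod_cast this
    have hQ : q x - s ≤ Q := by
      have := (fy_real ψ x s hs q).trans hq
      exact_mod_cast this
    have happ : ((l • p + (1 - l) • q) x : ℝ) = l * p x + (1 - l) * q x := by
      simp [smul_eq_mul]
    rw [hs, happ, ← EReal.coe_sub, EReal.coe_le_coe_iff]
    nlinarith [mul_le_mul_of_nonneg_left hP hl0, mul_le_mul_of_nonneg_left hQ (by linarith : (0:ℝ) ≤ 1 - l)]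

lemma coe_sum_ereal (s : Finset ℕ) (f : ℕ → ℝ) :
    ((∑ t ∈ s, f t : ℝ) : EReal) = ∑ t ∈ s, ((f t : ℝ) : EReal) := by
  induction s using Finset.cons_induction with
  | empty => simp
  | cons a s ha ih => rw [Finset.sum_cons, Finset.sum_cons, EReal.coe_add, ih]

end Aux

/-- **Telescoping lemma for nonincreasing cumulative parameters.** -/
theorem telescoping_nonincreasing_eta
    {E : Type*} [NormedAddCommGroup E] [NormedSpace ℝ E]
    (ψ : E → EReal) (hbot : ∀ x, ψ x ≠ ⊥) (hproper : ∃ x, ψ x ≠ ⊤)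
    (hconv : ∀ x y : E, ∀ a b : ℝ, 0 ≤ a → 0 ≤ b → a + b = 1 →
      ψ (a • x + b • y) ≤ (a : EReal) * ψ x + (b : EReal) * ψ y)
    (hlsc : LowerSemicontinuous ψ)
    (a : E) (apsi : E →L[ℝ] ℝ) (ha : apsi ∈ subdiff ψ a)
    (T : ℕ) (hT : 1 ≤ T)
    (η : ℕ → ℝ) (hηpos : 0 < η (T + 1))
    (hηmono : ∀ t ∈ Icc 1 T, η (t + 1) ≤ η t)
    (v : ℕ → E →L[ℝ] ℝ) (hv1 : v 1 = apsi)
    (z : E) (hz : ψ z < ⊤)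
    (hfin : ∀ t ∈ Icc 1 T, fconj ψ (v t) < ⊤ ∧
      fconj ψ (apsi + (η t / η (t + 1)) • (v (t + 1) - apsi)) < ⊤) :
    ∑ t ∈ Icc 1 T, ((1 / η t : ℝ) : EReal) *
        (breg ψ z (v t) -
         breg ψ z (apsi + (η t / η (t + 1)) • (v (t + 1) - apsi)))
      ≤ ((1 / η (T + 1) : ℝ) : EReal) * breg ψ z apsi := by
  classical
  -- positivity of η on [1, T+1]
  have hkey : ∀ d t, 1 ≤ t → t + d = T + 1 → η (T + 1) ≤ η t := by
    intro d
    induction d with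
    | zero => intro t h1 h2; have : t = T + 1 := by omega
              rw [this]
    | succ d ih =>
        intro t h1 h2
        have h3 : η (t + 1) ≤ η t := hηmono t (Finset.mem_Icc.mpr ⟨h1, by omega⟩)
        have h4 := ih (t + 1) (by omega) (by omega)
        linarith
  have hpos : ∀ t, 1 ≤ t → t ≤ T + 1 → 0 < η t := by
    intro t h1 h2
    exact lt_of_lt_of_le hηpos (hkey (T + 1 - t) t h1 (by omega))
  -- ψ z is a real number
  obtain ⟨s, hs⟩ : ∃ s : ℝ, ψ z = (s : EReal) :=
    ⟨(ψ z).toReal, (EReal.coe_toReal hz.ne (hbot z)).symm⟩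
  -- fconj of apsi is a real number
  have hAnb : fconj ψ apsi ≠ ⊥ := fconj_ne_bot ψ hbot hproper apsi
  have hAnt : fconj ψ apsi ≠ ⊤ := by
    intro htop
    have h0 : breg ψ a apsi = 0 := ha
    rw [breg, htop] at h0
    rw [EReal.add_top_of_ne_bot (hbot a)] at h0
    rw [EReal.top_sub_coe] at h0
    exact absurd h0 (by simp)
  obtain ⟨A, hA⟩ : ∃ A : ℝ, fconj ψ apsi = (A : EReal) :=
    ⟨(fconj ψ apsi).toReal, (EReal.coe_toReal hAnt hAnb).symm⟩
  -- abbreviation for the shifted dual points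
  set w : ℕ → (E →L[ℝ] ℝ) := fun t => apsi + (η t / η (t + 1)) • (v (t + 1) - apsi) with hwdef
  obtain ⟨G, hG⟩ : ∃ G : ℕ → ℝ, ∀ t ∈ Icc 1 T, fconj ψ (w t) = ((G t : ℝ) : EReal) :=
    ⟨fun t => (fconj ψ (w t)).toReal, fun t ht =>
      (EReal.coe_toReal (hfin t ht).2.ne (fconj_ne_bot ψ hbot hproper _)).symm⟩
  -- convex combination identity: v (t+1) = l • w t + (1-l) • apsi
  have hvt : ∀ t ∈ Icc 1 T, (η (t + 1) / η t) • (w t) + (1 - η (t + 1) / η t) • apsi = v (t + 1) := by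
    intro t ht
    obtain ⟨h1, h2⟩ := Finset.mem_Icc.mp ht
    have hp1 : (0:ℝ) < η t := hpos t h1 (by omega)
    have hp2 : (0:ℝ) < η (t + 1) := hpos (t + 1) (by omega) (by omega)
    have hml : η (t + 1) / η t * (η t / η (t + 1)) = 1 := by field_simp
    ext x
    simp only [ContinuousLinearMap.add_apply, ContinuousLinearMap.coe_smul',
      Pi.smul_apply, smul_eq_mul, ContinuousLinearMap.sub_apply, hwdef]
    linear_combination (v (t + 1) x - apsi x) * hml
  have hl0 : ∀ t ∈ Icc 1 T, (0:ℝ) ≤ η (t + 1) / η t := by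
    intro t ht
    obtain ⟨h1, h2⟩ := Finset.mem_Icc.mp ht
    exact div_nonneg (hpos (t + 1) (by omega) (by omega)).le (hpos t h1 (by omega)).le
  have hl1 : ∀ t ∈ Icc 1 T, η (t + 1) / η t ≤ 1 := by
    intro t ht
    obtain ⟨h1, h2⟩ := Finset.mem_Icc.mp ht
    exact div_le_one_of_le₀ (hηmono t ht) (hpos t h1 (by omega)).le
  -- convexity bound
  have hcombo : ∀ t ∈ Icc 1 T,
      fconj ψ (v (t + 1)) ≤ (((η (t + 1) / η t) * G t + (1 - η (t + 1) / η t) * A : ℝ) : EReal) := by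
    intro t ht
    rw [← hvt t ht]
    exact fconj_combo ψ hbot (w t) apsi (G t) A (hG t ht).le hA.le _ (hl0 t ht) (hl1 t ht)
  -- finiteness and real values of fconj (v t) for t ∈ [1, T+1]
  obtain ⟨F, hF⟩ : ∃ F : ℕ → ℝ, ∀ t ∈ Icc 1 (T + 1), fconj ψ (v t) = ((F t : ℝ) : EReal) := by
    refine ⟨fun t => (fconj ψ (v t)).toReal, fun t ht => ?_⟩
    obtain ⟨h1, h2⟩ := Finset.mem_Icc.mp ht
    have hnt : fconj ψ (v t) ≠ ⊤ := by
      rcases Nat.lt_or_ge t (T + 1) with h | h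
      · exact (hfin t (Finset.mem_Icc.mpr ⟨h1, by omega⟩)).1.ne
      · have : t = T + 1 := by omega
        subst this
        have := hcombo T (Finset.mem_Icc.mpr ⟨hT, le_refl T⟩)
        exact ((this.trans_lt (EReal.coe_lt_top _)).ne)
    exact (EReal.coe_toReal hnt (fconj_ne_bot ψ hbot hproper _)).symm
  -- real Bregman divergences
  set b : ℕ → ℝ := fun t => s + F t - v t z with hbdef
  set c : ℕ → ℝ := fun t => s + G t - w t z with hcdef
  set bA : ℝ := s + A - apsi z with hbAdef
  -- Fenchel-Young nonnegativity
  have hbnn : ∀ t ∈ Icc 1 (T + 1), 0 ≤ b t := by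
    intro t ht
    have h := fy_real ψ z s hs (v t)
    rw [hF t ht, EReal.coe_le_coe_iff] at h
    simp only [hbdef]; linarith
  -- key real inequality
  have hb1 : ∀ t ∈ Icc 1 T,
      b (t + 1) ≤ (η (t + 1) / η t) * c t + (1 - η (t + 1) / η t) * bA := by
    intro t ht
    obtain ⟨h1, h2⟩ := Finset.mem_Icc.mp ht
    have hFle : F (t + 1) ≤ (η (t + 1) / η t) * G t + (1 - η (t + 1) / η t) * A := by
      have h := hcombo t ht
      rw [hF (t + 1) (Finset.mem_Icc.mpr ⟨by omega, by omega⟩), EReal.coe_le_coe_iff] at h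
      exact h
    have happ : v (t + 1) z = (η (t + 1) / η t) * (w t z) + (1 - η (t + 1) / η t) * (apsi z) := by
      have h := congrArg (fun f : E →L[ℝ] ℝ => f z) (hvt t ht)
      simpa [smul_eq_mul] using h.symm
    simp only [hbdef, hcdef, hbAdef, happ]
    nlinarith [hFle]
  -- per-term bound
  have hterm : ∀ t ∈ Icc 1 T,
      (1 / η t) * (b t - c t) ≤
        ((1 / η t) * b t - (1 / η (t + 1)) * b (t + 1)) +
        ((1 / η (t + 1)) * bA - (1 / η t) * bA) := by
    intro t ht
    obtain ⟨h1, h2⟩ := Finset.mem_Icc.mp ht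
    have hp1 : (0:ℝ) < η t := hpos t h1 (by omega)
    have hp2 : (0:ℝ) < η (t + 1) := hpos (t + 1) (by omega) (by omega)
    have h3 := hb1 t ht
    have h4 : (1 / η (t + 1)) * b (t + 1) ≤
        (1 / η (t + 1)) * ((η (t + 1) / η t) * c t + (1 - η (t + 1) / η t) * bA) :=
      mul_le_mul_of_nonneg_left h3 (by positivity)
    have h5 : (1 / η (t + 1)) * ((η (t + 1) / η t) * c t + (1 - η (t + 1) / η t) * bA)
        = (1 / η t) * c t + ((1 / η (t + 1)) * bA - (1 / η t) * bA) := by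
      field_simp
    rw [h5] at h4
    linarith
  -- telescoping sums
  have tel : ∀ f : ℕ → ℝ, ∑ t ∈ Icc 1 T, (f t - f (t + 1)) = f 1 - f (T + 1) := by
    intro f
    rw [← Finset.Ico_add_one_right_eq_Icc, Finset.sum_Ico_eq_sum_range]
    have hTT : T + 1 - 1 = T := by omega
    rw [hTT]
    have h := Finset.sum_range_sub' (fun i => f (1 + i)) T
    rw [Nat.add_comm 1 T] at h
    exact h
  -- real version of the goal
  have hreal : ∑ t ∈ Icc 1 T, (1 / η t) * (b t - c t) ≤ (1 / η (T + 1)) * bA := by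
    have hsum := Finset.sum_le_sum hterm
    have e1 : ∑ t ∈ Icc 1 T, (((1 / η t) * b t - (1 / η (t + 1)) * b (t + 1)) +
        ((1 / η (t + 1)) * bA - (1 / η t) * bA))
        = ((1 / η 1) * b 1 - (1 / η (T + 1)) * b (T + 1)) +
          ((1 / η (T + 1)) * bA - (1 / η 1) * bA) := by
      rw [Finset.sum_add_distrib, tel (fun t => (1 / η t) * b t)]
      have h6 := tel (fun t => (1 / η t) * bA)
      have h2 : ∑ t ∈ Icc 1 T, ((1 / η (t + 1)) * bA - (1 / η t) * bA)
          = -∑ t ∈ Icc 1 T, ((1 / η t) * bA - (1 / η (t + 1)) * bA) := by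
        rw [← Finset.sum_neg_distrib]
        congr 1; ext t; ring
      rw [h2, h6]
      ring
    have hb1A : b 1 = bA := by
      have hFA : ((F 1 : ℝ) : EReal) = ((A : ℝ) : EReal) := by
        rw [← hF 1 (Finset.mem_Icc.mpr ⟨le_refl 1, by omega⟩), hv1, hA]
      have hFA' : F 1 = A := by exact_mod_cast hFA
      simp only [hbdef, hbAdef, hFA', hv1]
    have hbT1 : 0 ≤ b (T + 1) := hbnn (T + 1) (Finset.mem_Icc.mpr ⟨by omega, le_refl _⟩)
    refine le_trans hsum ?_
    rw [e1, hb1A]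
    have hnn : 0 ≤ (1 / η (T + 1)) * b (T + 1) := by positivity
    linarith
  -- cast back to EReal
  have hcast : ∀ t ∈ Icc 1 T,
      ((1 / η t : ℝ) : EReal) * (breg ψ z (v t) - breg ψ z (w t))
        = (((1 / η t) * (b t - c t) : ℝ) : EReal) := by
    intro t ht
    obtain ⟨h1, h2⟩ := Finset.mem_Icc.mp ht
    have hbv : breg ψ z (v t) = ((b t : ℝ) : EReal) := by
      rw [breg, hs, hF t (Finset.mem_Icc.mpr ⟨h1, by omega⟩), ← EReal.coe_add, ← EReal.coe_sub]
    have hbw : breg ψ z (w t) = ((c t : ℝ) : EReal) := by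
      rw [breg, hs, hG t ht, ← EReal.coe_add, ← EReal.coe_sub]
    rw [hbv, hbw, ← EReal.coe_sub, ← EReal.coe_mul]
  have hbA' : breg ψ z apsi = ((bA : ℝ) : EReal) := by
    rw [breg, hs, hA, ← EReal.coe_add, ← EReal.coe_sub]
  calc ∑ t ∈ Icc 1 T, ((1 / η t : ℝ) : EReal) * (breg ψ z (v t) - breg ψ z (w t))
      = ∑ t ∈ Icc 1 T, (((1 / η t) * (b t - c t) : ℝ) : EReal) := Finset.sum_congr rfl hcast
    _ = ((∑ t ∈ Icc 1 T, (1 / η t) * (b t - c t) : ℝ) : EReal) := (coe_sum_ereal _ _).symm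
    _ ≤ (((1 / η (T + 1)) * bA : ℝ) : EReal) := EReal.coe_le_coe_iff.mpr hreal
    _ = ((1 / η (T + 1) : ℝ) : EReal) * breg ψ z apsi := by rw [hbA', EReal.coe_mul]
end

section
/- Evaluation of the auxiliary penalty Φ: Let E* be a real normed vector space, ρ ∈ (0, +∞], ξ > 0, and x*, x̂* ∈ E*. Set λ = min{‖x*‖/‖x* − x̂*‖, 1} if x* ≠ x̂* and λ = 1 otherwise, and let ŷ* = λ x̂* + (1 − λ) x*. Define Φ = Q_ρ*(ξ‖x* − ŷ*‖) + inf_{γ>0} (1/γ)(Q_ρ*(γξ‖x*‖) + Q_ρ*(ξ‖x̂* − ŷ*‖)). Then Φ = Q_ρ*(ξ · min{‖x* − x̂*‖, ‖x*‖}) + ξ‖x*‖ · min{ξ(‖x* − x̂*‖ − ‖x*‖)₊, ρ}, and moreover Φ ≤ ξ² Q_{‖x*‖}*(‖x* − x̂*‖) − (1/2)(ξ · min{‖x* − x̂*‖, ‖x*‖} − ρ)₊². -/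
open scoped ENNReal

/-- `Q_r*(κ) = κ²/2 − (|κ| − r)₊²/2` for `r ∈ [0, +∞]` (with `(|κ| − ∞)₊ = 0`). -/
noncomputable def Qstar (r : ℝ≥0∞) (κ : ℝ) : ℝ :=
  κ ^ 2 / 2 - ((ENNReal.ofReal |κ| - r).toReal) ^ 2 / 2

lemma Qstar_def (r : ℝ≥0∞) (κ : ℝ) : Qstar r κ =
  κ ^ 2 / 2 - ((ENNReal.ofReal |κ| - r).toReal) ^ 2 / 2 := rfl

lemma Qstar_of_le {ρ : ℝ≥0∞} {κ : ℝ} (h : ENNReal.ofReal |κ| ≤ ρ) :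
    Qstar ρ κ = κ ^ 2 / 2 := by
  simp [Qstar, tsub_eq_zero_of_le h]

lemma Qstar_zero (ρ : ℝ≥0∞) : Qstar ρ 0 = 0 := by
  simp [Qstar, zero_tsub]

lemma toReal_sub_le {ρ : ℝ≥0∞} {κ : ℝ} (hκ : 0 ≤ κ) :
    (ENNReal.ofReal κ - ρ).toReal ≤ κ := by
  calc (ENNReal.ofReal κ - ρ).toReal ≤ (ENNReal.ofReal κ).toReal :=
        ENNReal.toReal_mono ENNReal.ofReal_ne_top tsub_le_self
    _ = κ := ENNReal.toReal_ofReal hκ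

lemma Qstar_nonneg (ρ : ℝ≥0∞) (κ : ℝ) : 0 ≤ Qstar ρ κ := by
  have h1 : 0 ≤ (ENNReal.ofReal |κ| - ρ).toReal := ENNReal.toReal_nonneg
  have h2 : (ENNReal.ofReal |κ| - ρ).toReal ≤ |κ| := toReal_sub_le (abs_nonneg κ)
  have := abs_nonneg κ
  have hsq : κ ^ 2 = |κ| ^ 2 := (sq_abs κ).symm
  rw [Qstar, hsq]
  nlinarith

lemma Qstar_le_half_sq (ρ : ℝ≥0∞) (κ : ℝ) : Qstar ρ κ ≤ κ ^ 2 / 2 := by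
  have h1 : 0 ≤ (ENNReal.ofReal |κ| - ρ).toReal := ENNReal.toReal_nonneg
  rw [Qstar]; nlinarith

-- key Fenchel-Young type lower bound
lemma Qstar_key_lb {ρ : ℝ≥0∞} {M u : ℝ} (hM : 0 ≤ M) (hMρ : ENNReal.ofReal M ≤ ρ)
    (hu : 0 ≤ u) : u * M - M ^ 2 / 2 ≤ Qstar ρ u := by
  have habs : |u| = u := abs_of_nonneg hu
  set t := (ENNReal.ofReal u - ρ).toReal with ht
  have h0 : 0 ≤ t := ENNReal.toReal_nonneg
  have h1 : t ≤ max (u - M) 0 := by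
    have : ENNReal.ofReal u - ρ ≤ ENNReal.ofReal u - ENNReal.ofReal M :=
      tsub_le_tsub_left hMρ _
    have h2 : ENNReal.ofReal u - ENNReal.ofReal M = ENNReal.ofReal (u - M) :=
      (ENNReal.ofReal_sub u hM).symm
    calc t ≤ (ENNReal.ofReal (u - M)).toReal := by
          rw [← h2]; exact ENNReal.toReal_mono (by rw [h2]; exact ENNReal.ofReal_ne_top) this
      _ = max (u - M) 0 := ENNReal.toReal_ofReal'.trans (by simp)
  rw [Qstar, habs, ← ht]
  rcases le_total M u with h | h
  · have : max (u - M) 0 = u - M := max_eq_left (by linarith)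
    rw [this] at h1
    nlinarith
  · have : max (u - M) 0 = 0 := max_eq_right (by linarith)
    rw [this] at h1
    have : t = 0 := le_antisymm h1 h0
    rw [this]; nlinarith

lemma Qstar_le_rho_mul {ρ : ℝ≥0∞} (hρ : ρ ≠ ⊤) {u : ℝ} (hu : 0 ≤ u) :
    Qstar ρ u ≤ ρ.toReal * u := by
  set r := ρ.toReal with hr
  have hr0 : 0 ≤ r := ENNReal.toReal_nonneg
  have habs : |u| = u := abs_of_nonneg hu
  rcases le_total u r with h | h
  · calc Qstar ρ u ≤ u ^ 2 / 2 := Qstar_le_half_sq ρ u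
      _ ≤ r * u := by nlinarith
  · have hsub : (ENNReal.ofReal u - ρ).toReal = u - r := by
      rw [← ENNReal.ofReal_toReal hρ, ← hr, ← ENNReal.ofReal_sub u hr0,
        ENNReal.toReal_ofReal (by linarith)]
    rw [Qstar, habs, hsub]; nlinarith

noncomputable section

lemma inf_eval (ρ : ℝ≥0∞) (a b : ℝ) (hρ : 0 < ρ) (ha : 0 ≤ a) (hb : 0 ≤ b) :
    (⨅ γ : {γ : ℝ // 0 < γ}, (1 / γ.1) * (Qstar ρ (γ.1 * a) + Qstar ρ b))
      = a * (min (ENNReal.ofReal b) ρ).toReal := by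
  set M := (min (ENNReal.ofReal b) ρ).toReal with hMdef
  have hM0 : 0 ≤ M := ENNReal.toReal_nonneg
  have hMb : M ≤ b := by
    calc M ≤ (ENNReal.ofReal b).toReal :=
          ENNReal.toReal_mono ENNReal.ofReal_ne_top (min_le_left _ _)
      _ = b := ENNReal.toReal_ofReal hb
  have hMρ : ENNReal.ofReal M ≤ ρ := by
    rcases eq_or_ne ρ ⊤ with h | h
    · simp [h]
    · have hne : min (ENNReal.ofReal b) ρ ≠ ⊤ := by simp [h]
      rw [hMdef, ENNReal.ofReal_toReal hne]
      exact min_le_right _ _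
  have hQb : M ^ 2 / 2 ≤ Qstar ρ b := by
    have := Qstar_key_lb hM0 hMρ hb
    nlinarith
  have hf0 : ∀ γ : {γ : ℝ // 0 < γ},
      a * M ≤ (1 / γ.1) * (Qstar ρ (γ.1 * a) + Qstar ρ b) := by
    rintro ⟨γ, hγ⟩
    show a * M ≤ 1 / γ * (Qstar ρ (γ * a) + Qstar ρ b)
    have h1 := Qstar_key_lb hM0 hMρ (mul_nonneg hγ.le ha)
    rw [one_div_mul_eq_div, le_div_iff₀ hγ]
    nlinarith
  have hbdd : BddBelow (Set.range fun γ : {γ : ℝ // 0 < γ} =>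
      (1 / γ.1) * (Qstar ρ (γ.1 * a) + Qstar ρ b)) :=
    ⟨a * M, by rintro x ⟨γ, rfl⟩; exact hf0 γ⟩
  have hne : Nonempty {γ : ℝ // 0 < γ} := ⟨⟨1, one_pos⟩⟩
  apply le_antisymm
  · apply le_of_forall_pos_le_add
    intro ε hε
    suffices h : ∃ γ0 : ℝ, ∃ hγ0 : 0 < γ0,
        (1 / γ0) * (Qstar ρ (γ0 * a) + Qstar ρ b) ≤ a * M + ε by
      obtain ⟨γ0, hγ0, hle⟩ := h
      exact le_trans (ciInf_le hbdd ⟨γ0, hγ0⟩) hle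
    have hQbnn : 0 ≤ Qstar ρ b := Qstar_nonneg ρ b
    rcases eq_or_lt_of_le ha with ha0 | ha0
    · -- a = 0 : take γ large
      have hγpos : (0:ℝ) < Qstar ρ b / ε + 1 := by positivity
      refine ⟨Qstar ρ b / ε + 1, hγpos, ?_⟩
      rw [← ha0, zero_mul, mul_zero, Qstar_zero, zero_add, zero_add,
        one_div_mul_eq_div, div_le_iff₀ hγpos]
      have h5 : Qstar ρ b / ε * ε = Qstar ρ b := div_mul_cancel₀ _ (ne_of_gt hε)
      nlinarith
    rcases eq_or_lt_of_le hb with hb0 | hb0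
    · -- b = 0 : take γ small
      have hγpos : (0:ℝ) < 2 * ε / a ^ 2 := by positivity
      refine ⟨2 * ε / a ^ 2, hγpos, ?_⟩
      have hM0' : M = 0 := by rw [hMdef, ← hb0]; simp
      rw [← hb0, Qstar_zero, add_zero, hM0', mul_zero, zero_add,
        one_div_mul_eq_div, div_le_iff₀ hγpos]
      have hc := Qstar_le_half_sq ρ ((2 * ε / a ^ 2) * a)
      have h6 : ε * (2 * ε / a ^ 2) = (2 * ε / a ^ 2 * a) ^ 2 / 2 := by
        field_simp
      linarith
    rcases le_or_gt (ENNReal.ofReal b) ρ with hle | hlt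
    · -- take γ = b / a : exact value a*b = a*M
      have hMb' : M = b := by rw [hMdef, min_eq_left hle, ENNReal.toReal_ofReal hb]
      refine ⟨b / a, by positivity, ?_⟩
      have hba : b / a * a = b := div_mul_cancel₀ b (ne_of_gt ha0)
      rw [hba, Qstar_of_le (by rwa [abs_of_nonneg hb]), hMb']
      have h7 : (1 : ℝ) / (b / a) * (b ^ 2 / 2 + b ^ 2 / 2) = a * b := by
        field_simp; ring
      rw [h7]; linarith
    · -- ρ < ofReal b, take γ large
      have hρtop : ρ ≠ ⊤ := fun h => (not_top_lt (h ▸ hlt)).elim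
      have hMρ' : M = ρ.toReal := by rw [hMdef, min_eq_right hlt.le]
      have hγpos : (0:ℝ) < Qstar ρ b / ε + 1 := by positivity
      refine ⟨Qstar ρ b / ε + 1, hγpos, ?_⟩
      set γ := Qstar ρ b / ε + 1 with hγdef
      clear_value γ
      have h3 : Qstar ρ (γ * a) ≤ ρ.toReal * (γ * a) :=
        Qstar_le_rho_mul hρtop (by positivity)
      have h4 : Qstar ρ b ≤ ε * γ := by
        have h5 : Qstar ρ b / ε * ε = Qstar ρ b := div_mul_cancel₀ _ (ne_of_gt hε)
        have h6 : ε * γ = Qstar ρ b / ε * ε + ε := by rw [hγdef]; ring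
        linarith
      rw [hMρ', one_div_mul_eq_div, div_le_iff₀ hγpos]
      calc Qstar ρ (γ * a) + Qstar ρ b ≤ ρ.toReal * (γ * a) + ε * γ := by linarith
        _ = (a * ρ.toReal + ε) * γ := by ring
  · exact le_ciInf hf0

end

lemma Qstar_ofReal {r κ : ℝ} (hr : 0 ≤ r) (hκ : 0 ≤ κ) :
    Qstar (ENNReal.ofReal r) κ = κ ^ 2 / 2 - (max (κ - r) 0) ^ 2 / 2 := by
  rw [Qstar_def, abs_of_nonneg hκ, ← ENNReal.ofReal_sub κ hr,
    ENNReal.toReal_ofReal']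


/-- **Evaluation of the auxiliary penalty `Φ`.** With
`λ = min{‖x*‖/‖x* − x̂*‖, 1}` (and `λ = 1` if `x* = x̂*`), `ŷ* = λ x̂* + (1 − λ) x*`, and
`Φ = Q_ρ*(ξ‖x* − ŷ*‖) + inf_{γ>0} (1/γ)(Q_ρ*(γξ‖x*‖) + Q_ρ*(ξ‖x̂* − ŷ*‖))`, one has
`Φ = Q_ρ*(ξ min{‖x* − x̂*‖, ‖x*‖}) + ξ‖x*‖ min{ξ(‖x* − x̂*‖ − ‖x*‖)₊, ρ}` and
`Φ ≤ ξ² Q_{‖x*‖}*(‖x* − x̂*‖) − (1/2)(ξ min{‖x* − x̂*‖, ‖x*‖} − ρ)₊²`. -/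
theorem auxiliary_penalty_evaluation
    {F : Type*} [NormedAddCommGroup F] [NormedSpace ℝ F]
    (ρ : ℝ≥0∞) (hρ : 0 < ρ) (ξ : ℝ) (hξ : 0 < ξ)
    (xs xh : F)
    (lam : ℝ)
    (hlam : (xs = xh → lam = 1) ∧ (xs ≠ xh → lam = min (‖xs‖ / ‖xs - xh‖) 1))
    (yh : F) (hyh : yh = lam • xh + (1 - lam) • xs)
    (Phi : ℝ)
    (hPhi : Phi = Qstar ρ (ξ * ‖xs - yh‖) +
      ⨅ γ : {γ : ℝ // 0 < γ},
        (1 / γ.1) * (Qstar ρ (γ.1 * ξ * ‖xs‖) + Qstar ρ (ξ * ‖xh - yh‖))) :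
    Phi = Qstar ρ (ξ * min ‖xs - xh‖ ‖xs‖)
        + ξ * ‖xs‖ * (min (ENNReal.ofReal (ξ * max (‖xs - xh‖ - ‖xs‖) 0)) ρ).toReal
    ∧ Phi ≤ ξ ^ 2 * Qstar (ENNReal.ofReal ‖xs‖) ‖xs - xh‖
        - (1 / 2) * ((ENNReal.ofReal (ξ * min ‖xs - xh‖ ‖xs‖) - ρ).toReal) ^ 2 := by
  set d := ‖xs - xh‖ with hd
  set n := ‖xs‖ with hn
  have hd0 : 0 ≤ d := norm_nonneg _
  have hn0 : 0 ≤ n := norm_nonneg _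
  -- norms of xs - yh and xh - yh
  have h1 : ‖xs - yh‖ = min d n ∧ ‖xh - yh‖ = max (d - n) 0 := by
    rcases eq_or_ne xs xh with heq | hne
    · have hl : lam = 1 := hlam.1 heq
      have hd' : d = 0 := by rw [hd, heq, sub_self, norm_zero]
      have hy : yh = xs := by rw [hyh, hl, heq]; module
      constructor
      · rw [hy, sub_self, norm_zero, hd', min_eq_left hn0]
      · rw [hy, ← heq, sub_self, norm_zero, hd']
        simp [hn0]
    · have hdpos : 0 < d := by
        rw [hd]; exact norm_sub_pos_iff.mpr hne
      have hl : lam = min (n / d) 1 := hlam.2 hne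
      have hl0 : 0 ≤ lam := by
        rw [hl]; exact le_min (by positivity) one_pos.le
      have hl1 : lam ≤ 1 := by rw [hl]; exact min_le_right _ _
      have hxsy : xs - yh = lam • (xs - xh) := by rw [hyh]; module
      have hxhy : xh - yh = (1 - lam) • (xh - xs) := by rw [hyh]; module
      have hlamd : lam * d = min d n := by
        rcases le_total n d with h | h
        · rw [hl, min_eq_left (by rw [div_le_one hdpos]; exact h),
            div_mul_cancel₀ n (ne_of_gt hdpos), min_eq_right h]
        · rw [hl, min_eq_right (by rw [le_div_iff₀ hdpos]; linarith), one_mul,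
            min_eq_left h]
      constructor
      · rw [hxsy, norm_smul, Real.norm_eq_abs, abs_of_nonneg hl0, ← hd, hlamd]
      · rw [hxhy, norm_smul, Real.norm_eq_abs, abs_of_nonneg (by linarith),
          norm_sub_rev, ← hd]
        rcases le_total n d with h | h
        · rw [max_eq_left (by linarith)]
          have := hlamd
          rw [min_eq_right h] at this
          have hdd : lam * d = n := this
          nlinarith
        · rw [max_eq_right (by linarith)]
          have := hlamd
          rw [min_eq_left h] at this
          nlinarith
  obtain ⟨h1a, h1b⟩ := h1
  set B := ξ * max (d - n) 0 with hB
  set M := (min (ENNReal.ofReal B) ρ).toReal with hM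
  have hB0 : 0 ≤ B := by positivity
  have hinf : (⨅ γ : {γ : ℝ // 0 < γ},
      (1 / γ.1) * (Qstar ρ (γ.1 * ξ * n) + Qstar ρ (ξ * ‖xh - yh‖))) = (ξ * n) * M := by
    rw [h1b, ← hB]
    have hcong : ∀ γ : {γ : ℝ // 0 < γ},
        (1 / γ.1) * (Qstar ρ (γ.1 * ξ * n) + Qstar ρ B)
          = (1 / γ.1) * (Qstar ρ (γ.1 * (ξ * n)) + Qstar ρ B) := by
      intro γ; rw [mul_assoc]
    rw [iInf_congr hcong]
    exact inf_eval ρ (ξ * n) B hρ (by positivity) hB0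
  have hPhi' : Phi = Qstar ρ (ξ * min d n) + (ξ * n) * M := by
    rw [hPhi, h1a, hinf]
  refine ⟨hPhi', ?_⟩
  -- part 2
  set m := ξ * min d n with hm
  have hm0 : 0 ≤ m := by positivity
  set T := ((ENNReal.ofReal m - ρ).toReal) with hT
  have hQm : Qstar ρ m = m ^ 2 / 2 - T ^ 2 / 2 := by
    rw [Qstar_def, abs_of_nonneg hm0, hT]
  have hQn : ξ ^ 2 * Qstar (ENNReal.ofReal n) d = m ^ 2 / 2 + (ξ * n) * B := by
    rw [Qstar_ofReal hn0 hd0, hm, hB]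
    rcases le_total d n with h | h
    · rw [min_eq_left h, max_eq_right (by linarith)]; ring
    · rw [min_eq_right h, max_eq_left (by linarith)]; ring
  have hMB : M ≤ B := by
    rw [hM]
    calc (min (ENNReal.ofReal B) ρ).toReal ≤ (ENNReal.ofReal B).toReal :=
          ENNReal.toReal_mono ENNReal.ofReal_ne_top (min_le_left _ _)
      _ = B := ENNReal.toReal_ofReal hB0
  have hAM : (ξ * n) * M ≤ (ξ * n) * B :=
    mul_le_mul_of_nonneg_left hMB (by positivity)
  rw [hPhi', hQm, hQn]
  linarith
end
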